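/- Let (W,S) be a finite Coxeter system with set of reflections T and let c = s_1 s_2 ⋯ s_n be a standard Coxeter element. In the monoid presented by generators { b_t : t ∈ T } subject to the dual braid relations b_{t_1} b_{t_2} = b_{t_2} b_{t_3} (for t_1, t_2, t_3 ∈ T with t_1 t_2 = t_2 t_3 and t_1 t_2 ≼_T c), the generators indexed by elements of S satisfy the Artin braid relations: for all s, s' ∈ S, b_s b_{s'} b_s ⋯ = b_{s'} b_s b_{s'} ⋯ with m_{s,s'} alternating factors on each side, where m_{s,s'} is the order of s s' in W. Consequently there is a monoid homomorphism from the Artin–Tits monoid B⁺(W) to this presented monoid sending each Artin generator b_s to the dual generator b_s. -/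

import Mathlib

/-- The length `ℓ_T` of `w` with respect to the set `T` of all reflections. -/
noncomputable def reflLength {B W : Type} [Group W] {M : CoxeterMatrix B}
    (cs : CoxeterSystem M W) (w : W) : ℕ :=
  sInf { k | ∃ l : List W, l.length = k ∧ (∀ t ∈ l, cs.IsReflection t) ∧ l.prod = w }

/-- `x ≼_T y` : divisibility with respect to the absolute (reflection) length. -/
def reflDvd {B W : Type} [Group W] {M : CoxeterMatrix B}
    (cs : CoxeterSystem M W) (x y : W) : Prop :=
  reflLength cs x + reflLength cs (x⁻¹ * y) = reflLength cs y

/-- The dual braid relations on the generating set `{ b_t : t ∈ T }`: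
`b_{t₁} b_{t₂} = b_{t₂} b_{t₃}` whenever `t₁ t₂ = t₂ t₃` and `t₁ t₂ ≼_T c`. -/
def dualBraidRels {B W : Type} [Group W] {M : CoxeterMatrix B}
    (cs : CoxeterSystem M W) (c : W) :
    FreeMonoid { t : W // cs.IsReflection t } → FreeMonoid { t : W // cs.IsReflection t } → Prop :=
  fun u v => ∃ t₁ t₂ t₃ : { t : W // cs.IsReflection t },
    u = FreeMonoid.of t₁ * FreeMonoid.of t₂ ∧ v = FreeMonoid.of t₂ * FreeMonoid.of t₃ ∧
    (t₁ : W) * (t₂ : W) = (t₂ : W) * (t₃ : W) ∧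
    reflDvd cs ((t₁ : W) * (t₂ : W)) c

/-- The Artin–Tits (braid) relations on the generating set `{ b_s : s ∈ S }`:
the alternating words `b_s b_{s'} b_s ⋯` and `b_{s'} b_s b_{s'} ⋯` with `m_{s,s'}`
factors on each side are identified. -/
def artinMonoidRels {B : Type} (M : CoxeterMatrix B) :
    FreeMonoid B → FreeMonoid B → Prop :=
  fun u v => ∃ i j : B,
    u = ((CoxeterSystem.braidWord M i j).map FreeMonoid.of).prod ∧
    v = ((CoxeterSystem.braidWord M j i).map FreeMonoid.of).prod

namespace DualAux

open CoxeterSystem List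

variable {B W : Type} [Group W] {M : CoxeterMatrix B} (cs : CoxeterSystem M W)

lemma reflLength_le {w : W} {L : List W} (h1 : ∀ t ∈ L, cs.IsReflection t) (h2 : L.prod = w) :
    reflLength cs w ≤ L.length := Nat.sInf_le ⟨L, rfl, h1, h2⟩

lemma reflSet_nonempty (w : W) :
    {k | ∃ l : List W, l.length = k ∧ (∀ t ∈ l, cs.IsReflection t) ∧ l.prod = w}.Nonempty := by
  obtain ⟨ω, rfl⟩ := cs.wordProd_surjective w
  refine ⟨(ω.map cs.simple).length, ω.map cs.simple, rfl, ?_, rfl⟩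
  intro t ht
  obtain ⟨i, _, rfl⟩ := List.mem_map.1 ht
  exact cs.isReflection_simple i

lemma exists_reflList (w : W) : ∃ L : List W, L.length = reflLength cs w ∧
    (∀ t ∈ L, cs.IsReflection t) ∧ L.prod = w := Nat.sInf_mem (reflSet_nonempty cs w)

lemma reflLength_triangle (x y : W) :
    reflLength cs y ≤ reflLength cs x + reflLength cs (x⁻¹ * y) := by
  obtain ⟨L1, h1, h2, h3⟩ := exists_reflList cs x
  obtain ⟨L2, g1, g2, g3⟩ := exists_reflList cs (x⁻¹ * y)
  have key := reflLength_le cs (L := L1 ++ L2) (w := y) ?_ ?_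
  · simpa [h1, g1] using key
  · intro t ht; rcases List.mem_append.1 ht with h | h
    exacts [h2 t h, g2 t h]
  · rw [List.prod_append, h3, g3]; group


variable (c : W) (i j : B)

/-- The rotated reflections `t_k = s_i (s_i s_j)^k`. -/
def tk (k : ℕ) : W := cs.simple i * (cs.simple i * cs.simple j) ^ k

lemma tk_zero : tk cs i j 0 = cs.simple i := by simp [tk]

lemma tk_one : tk cs i j 1 = cs.simple j := by
  simp [tk, ← mul_assoc, cs.simple_mul_simple_self]

lemma conj_si_pow (k : ℕ) : cs.simple i * (cs.simple i * cs.simple j) ^ k * cs.simple i =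
    ((cs.simple i * cs.simple j)⁻¹) ^ k := by
  have h1 : cs.simple i * (cs.simple i * cs.simple j) * (cs.simple i)⁻¹ =
      (cs.simple i * cs.simple j)⁻¹ := by
    simp [mul_inv_rev, cs.inv_simple, ← mul_assoc, cs.simple_mul_simple_self]
  rw [← h1, conj_pow, cs.inv_simple]

lemma tk_mul (k : ℕ) : tk cs i j k * tk cs i j (k + 1) = cs.simple i * cs.simple j := by
  have h := conj_si_pow cs i j k
  calc tk cs i j k * tk cs i j (k+1)
      = (cs.simple i * (cs.simple i * cs.simple j) ^ k * cs.simple i) *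
        (cs.simple i * cs.simple j) ^ (k+1) := by rw [tk, tk]; group
    _ = ((cs.simple i * cs.simple j)⁻¹) ^ k * (cs.simple i * cs.simple j) ^ (k+1) := by rw [h]
    _ = cs.simple i * cs.simple j := by
        rw [pow_succ, inv_pow, ← mul_assoc, inv_mul_cancel, one_mul]

lemma tk_rec (k : ℕ) : tk cs i j (k + 2) =
    (tk cs i j (k+1))⁻¹ * tk cs i j k * ((tk cs i j (k+1))⁻¹)⁻¹ := by
  have key : tk cs i j (k+1) * tk cs i j (k+2) = tk cs i j k * tk cs i j (k+1) := by
    rw [tk_mul cs i j k, tk_mul cs i j (k+1)]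
  rw [inv_inv, mul_assoc, ← key, ← mul_assoc, inv_mul_cancel, one_mul]

lemma tk_refl (k : ℕ) : cs.IsReflection (tk cs i j k) := by
  induction k using Nat.twoStepInduction with
  | zero => rw [tk_zero]; exact cs.isReflection_simple i
  | one => rw [tk_one]; exact cs.isReflection_simple j
  | more k ih1 ih2 =>
      rw [tk_rec]
      exact ih1.conj _

lemma tk_period {m : ℕ} (hm : (cs.simple i * cs.simple j) ^ m = 1) (k : ℕ) :
    tk cs i j (k + m) = tk cs i j k := by
  rw [tk, tk, pow_add, hm, mul_one]

/-- The dual generator attached to the reflection `t_k`. -/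
def gk (k : ℕ) : PresentedMonoid (dualBraidRels cs c) :=
  PresentedMonoid.of (dualBraidRels cs c) ⟨tk cs i j k, tk_refl cs i j k⟩

lemma gk_period {m : ℕ} (hm : (cs.simple i * cs.simple j) ^ m = 1) (k : ℕ) :
    gk cs c i j (k + m) = gk cs c i j k := by
  unfold gk
  congr 1
  exact Subtype.ext (tk_period cs i j hm k)

lemma pm_sound {α : Type} {rels : FreeMonoid α → FreeMonoid α → Prop} {u v : FreeMonoid α}
    (h : rels u v) : PresentedMonoid.mk rels u = PresentedMonoid.mk rels v :=
  Quotient.sound (ConGen.Rel.of _ _ h)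

lemma grel (hdvd : reflDvd cs (cs.simple i * cs.simple j) c) (k : ℕ) :
    gk cs c i j k * gk cs c i j (k+1) = gk cs c i j (k+1) * gk cs c i j (k+2) := by
  unfold gk PresentedMonoid.of
  rw [← map_mul, ← map_mul]
  apply pm_sound
  refine ⟨_, _, _, rfl, rfl, ?_, ?_⟩
  · rw [tk_mul cs i j k, tk_mul cs i j (k+1)]
  · rw [tk_mul cs i j k]; exact hdvd

lemma mul_pow_swap {Mo : Type} [Monoid Mo] (x y : Mo) (n : ℕ) :
    (x*y)^(n+1) = x * (y*x)^n * y := by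
  induction n with
  | zero => simp
  | succ n ih => rw [pow_succ' (x*y), ih, pow_succ' (y*x)]; simp [mul_assoc]

/-- consecutive products of the dual generators -/
def cprod : ℕ → ℕ → PresentedMonoid (dualBraidRels cs c)
  | _, 0 => 1
  | a, p+1 => gk cs c i j a * cprod (a+1) p

lemma cprod_succ (a p : ℕ) :
    cprod cs c i j a (p+1) = gk cs c i j a * cprod cs c i j (a+1) p := rfl

lemma cprod_succ_right (a p : ℕ) :
    cprod cs c i j a (p+1) = cprod cs c i j a p * gk cs c i j (a+p) := by
  induction p generalizing a with
  | zero => show gk cs c i j a * 1 = 1 * gk cs c i j (a+0); simp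
  | succ p ih =>
      rw [cprod_succ, ih (a+1), cprod_succ, mul_assoc]
      have : a + 1 + p = a + (p+1) := by omega
      rw [this]

variable {c i j}

lemma grel_shift (hdvd : reflDvd cs (cs.simple i * cs.simple j) c) (k a : ℕ) :
    gk cs c i j a * gk cs c i j (a+1) = gk cs c i j (a+k) * gk cs c i j (a+k+1) := by
  induction k with
  | zero => rfl
  | succ k ih =>
      rw [ih, grel cs c i j hdvd (a+k)]
      have h1 : a + k + 1 = a + (k+1) := by omega
      have h2 : a + k + 2 = a + (k+1) + 1 := by omega
      rw [h1, h2]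

lemma pow_eq_cprod (hdvd : reflDvd cs (cs.simple i * cs.simple j) c) (q : ℕ) :
    ∀ a, (gk cs c i j a * gk cs c i j (a+1))^q = cprod cs c i j a (2*q) := by
  induction q with
  | zero => intro a; rw [pow_zero]; rfl
  | succ q ih =>
      intro a
      have hb : gk cs c i j a * gk cs c i j (a+1)
          = gk cs c i j (a+2) * gk cs c i j (a+2+1) := grel_shift cs hdvd 2 a
      have hq : (gk cs c i j a * gk cs c i j (a+1))^q = cprod cs c i j (a+2) (2*q) := by
        rw [hb]; exact ih (a+2)
      have h2 : 2*(q+1) = (2*q)+1+1 := by ring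
      rw [pow_succ', hq, h2, cprod_succ, cprod_succ, mul_assoc]

lemma cprod_shift (hdvd : reflDvd cs (cs.simple i * cs.simple j) c) (q : ℕ) :
    ∀ a, cprod cs c i j a (2*q) = cprod cs c i j (a+1) (2*q) := by
  induction q with
  | zero => intro a; rfl
  | succ q ih =>
      intro a
      have h2 : 2*(q+1) = (2*q)+1+1 := by ring
      rw [h2, cprod_succ, cprod_succ, ← mul_assoc, grel_shift cs hdvd 1 a, ih (a+1+1),
        cprod_succ, cprod_succ, ← mul_assoc]

variable (c i j)

/-- The images of the simple reflections in the dual presented monoid. -/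
def Fg (k : B) : PresentedMonoid (dualBraidRels cs c) :=
  PresentedMonoid.of (dualBraidRels cs c) ⟨cs.simple k, cs.isReflection_simple k⟩

lemma Fg_i : Fg cs c i = gk cs c i j 0 :=
  congrArg (PresentedMonoid.of (dualBraidRels cs c)) (Subtype.ext (tk_zero cs i j).symm)

lemma Fg_j : Fg cs c j = gk cs c i j 1 :=
  congrArg (PresentedMonoid.of (dualBraidRels cs c)) (Subtype.ext (tk_one cs i j).symm)

lemma alt_even (q : ℕ) :
    ((CoxeterSystem.alternatingWord i j (2*q)).map (Fg cs c)).prod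
      = (Fg cs c i * Fg cs c j)^q := by
  induction q with
  | zero => simp [CoxeterSystem.alternatingWord]
  | succ q ih =>
      have h2 : 2*(q+1) = (2*q)+1+1 := by ring
      have hne : ¬ Even (2*q+1) := by simp [Nat.even_add_one, parity_simps]
      have he : Even (2*q) := even_two_mul q
      rw [h2, CoxeterSystem.alternatingWord_succ', if_neg hne,
        CoxeterSystem.alternatingWord_succ', if_pos he, List.map_cons, List.map_cons,
        List.prod_cons, List.prod_cons, ih, pow_succ', mul_assoc]

lemma alt_odd (q : ℕ) :
    ((CoxeterSystem.alternatingWord i j (2*q+1)).map (Fg cs c)).prod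
      = Fg cs c j * (Fg cs c i * Fg cs c j)^q := by
  rw [CoxeterSystem.alternatingWord_succ', if_pos (even_two_mul q), List.map_cons,
    List.prod_cons, alt_even]

variable {i j}

lemma cprod1_succ (p : ℕ) :
    cprod cs c i j 1 (p+1) = gk cs c i j 1 * cprod cs c i j 2 p := rfl

lemma cprod0_succ (p : ℕ) :
    cprod cs c i j 0 (p+1) = gk cs c i j 0 * cprod cs c i j 1 p := rfl

lemma cprod1_succ_right (p : ℕ) :
    cprod cs c i j 1 (p+1) = cprod cs c i j 1 p * gk cs c i j (p+1) := by
  rw [cprod_succ_right, Nat.add_comm 1 p]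

variable {c}

lemma pow_eq_cprod' (hdvd : reflDvd cs (cs.simple i * cs.simple j) c) (q : ℕ) :
    (gk cs c i j 0 * gk cs c i j 1)^q = cprod cs c i j 0 (2*q) :=
  pow_eq_cprod cs hdvd q 0

lemma cprod_shift01 (hdvd : reflDvd cs (cs.simple i * cs.simple j) c) (q : ℕ) :
    cprod cs c i j 0 (2*q) = cprod cs c i j 1 (2*q) :=
  cprod_shift cs hdvd q 0

lemma cprod_shift12 (hdvd : reflDvd cs (cs.simple i * cs.simple j) c) (q : ℕ) :
    cprod cs c i j 1 (2*q) = cprod cs c i j 2 (2*q) :=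
  cprod_shift cs hdvd q 1

lemma gk_eq_of_eq {k k' : ℕ} (h : k = k') : gk cs c i j k = gk cs c i j k' := by rw [h]

lemma cprod_eq_of_eq {a : ℕ} {p p' : ℕ} (h : p = p') :
    cprod cs c i j a p = cprod cs c i j a p' := by rw [h]

lemma partA (hij : i ≠ j) (hdvd : reflDvd cs (cs.simple i * cs.simple j) c) :
    ((CoxeterSystem.braidWord M i j).map (Fg cs c)).prod =
    ((CoxeterSystem.braidWord M j i).map (Fg cs c)).prod := by
  have hm1 : (cs.simple i * cs.simple j) ^ (M i j) = 1 := cs.simple_mul_simple_pow i j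
  have hsym : M j i = M i j := (M.symmetric i j).symm
  have hg0 : gk cs c i j 0 = gk cs c i j (0 + M i j) := (gk_period cs c i j hm1 0).symm
  show ((CoxeterSystem.alternatingWord i j (M i j)).map (Fg cs c)).prod =
    ((CoxeterSystem.alternatingWord j i (M j i)).map (Fg cs c)).prod
  rw [hsym]
  have hm_ne : M i j ≠ 1 := M.off_diagonal i j hij
  rcases Nat.even_or_odd (M i j) with ⟨q, hq⟩ | ⟨q, hq⟩
  · -- even case, M i j = q + q
    rcases Nat.eq_zero_or_pos q with rfl | hqpos
    · simp only [hq]; rfl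
    obtain ⟨q', rfl⟩ : ∃ q', q = q' + 1 := ⟨q - 1, by omega⟩
    have hq2 : M i j = 2*(q'+1) := by omega
    rw [hq2, alt_even cs c i j, alt_even cs c j i,
      Fg_i cs c i j, Fg_j cs c i j]
    have hL : (gk cs c i j 0 * gk cs c i j 1)^(q'+1) = cprod cs c i j 1 (2*(q'+1)) := by
      rw [pow_eq_cprod' cs hdvd, cprod_shift01 cs hdvd]
    have hR : (gk cs c i j 1 * gk cs c i j 0)^(q'+1) = cprod cs c i j 1 (2*(q'+1)) :=
      calc (gk cs c i j 1 * gk cs c i j 0)^(q'+1)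
          = gk cs c i j 1 * (gk cs c i j 0 * gk cs c i j 1)^q' * gk cs c i j 0 :=
            mul_pow_swap _ _ _
        _ = gk cs c i j 1 * cprod cs c i j 2 (2*q') * gk cs c i j 0 := by
            rw [pow_eq_cprod' cs hdvd, cprod_shift01 cs hdvd, cprod_shift12 cs hdvd]
        _ = cprod cs c i j 1 (2*q'+1) * gk cs c i j (2*q'+1+1) := by
            rw [← cprod1_succ cs c]
            rw [hg0, gk_eq_of_eq cs (show 0 + M i j = 2*q'+1+1 by omega)]
        _ = cprod cs c i j 1 (2*(q'+1)) := by
            rw [← cprod1_succ_right cs c]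
            exact cprod_eq_of_eq cs (by ring)
    rw [hL, hR]
  · -- odd case, M i j = 2*q+1
    have hqpos : 1 ≤ q := by omega
    obtain ⟨q', rfl⟩ : ∃ q', q = q' + 1 := ⟨q - 1, by omega⟩
    rw [hq, alt_odd cs c i j, alt_odd cs c j i,
      Fg_i cs c i j, Fg_j cs c i j]
    have hL : gk cs c i j 1 * (gk cs c i j 0 * gk cs c i j 1)^(q'+1)
        = cprod cs c i j 1 (2*(q'+1)+1) := by
      rw [pow_eq_cprod' cs hdvd, cprod_shift01 cs hdvd, cprod_shift12 cs hdvd,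
        ← cprod1_succ cs c]
    have hR : gk cs c i j 0 * (gk cs c i j 1 * gk cs c i j 0)^(q'+1)
        = cprod cs c i j 1 (2*(q'+1)+1) :=
      calc gk cs c i j 0 * (gk cs c i j 1 * gk cs c i j 0)^(q'+1)
          = gk cs c i j 0 * (gk cs c i j 1 * (gk cs c i j 0 * gk cs c i j 1)^q'
              * gk cs c i j 0) := by rw [mul_pow_swap]
        _ = gk cs c i j 0 * (gk cs c i j 1 * cprod cs c i j 2 (2*q') * gk cs c i j 0) := by
            rw [pow_eq_cprod' cs hdvd, cprod_shift01 cs hdvd, cprod_shift12 cs hdvd]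
        _ = (gk cs c i j 0 * cprod cs c i j 1 (2*q'+1)) * gk cs c i j 0 := by
            rw [← cprod1_succ cs c, mul_assoc]
        _ = cprod cs c i j 1 (2*(q'+1)) * gk cs c i j (2*(q'+1)+1) := by
            rw [← cprod0_succ cs c,
              cprod_eq_of_eq cs (show 2*q'+1+1 = 2*(q'+1) by ring),
              cprod_shift01 cs hdvd,
              hg0, gk_eq_of_eq cs (show 0 + M i j = 2*(q'+1)+1 by omega)]
        _ = cprod cs c i j 1 (2*(q'+1)+1) := by
            rw [← cprod1_succ_right cs c]
    rw [hL, hR]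

section Geom

open Real

variable (M) [Fintype B] [DecidableEq B]

/-- standard basis vectors -/
noncomputable def al (i : B) : B → ℝ := Pi.single i 1

/-- the bilinear form of the geometric representation, paired with `α_i` -/
noncomputable def Kl (i : B) : (B → ℝ) →ₗ[ℝ] ℝ where
  toFun v := ∑ k, (-Real.cos (Real.pi / M i k)) * v k
  map_add' u v := by
    simp [mul_add, Finset.sum_add_distrib]
  map_smul' r v := by
    simp only [Pi.smul_apply, smul_eq_mul, RingHom.id_apply, Finset.mul_sum]
    exact Finset.sum_congr rfl fun k _ => by ring

/-- the geometric reflection attached to `i` -/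
noncomputable def sig (i : B) : Module.End ℝ (B → ℝ) :=
  LinearMap.id - (2 : ℝ) • (Kl M i).smulRight (al i)

lemma sig_apply (i : B) (v : B → ℝ) : sig M i v = v - (2 * Kl M i v) • al i := by
  simp [sig, smul_smul]

lemma Kl_al (i k : B) : Kl M i (al k) = -Real.cos (Real.pi / M i k) := by
  simp [Kl, al, Pi.single_apply]

lemma Kl_al_self (i : B) : Kl M i (al i) = 1 := by
  rw [Kl_al, M.diagonal i]
  simp

lemma sig_al_self (i : B) : sig M i (al i) = - al i := by
  rw [sig_apply, Kl_al_self]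
  ext b
  simp
  ring

lemma sig_invol (i : B) (v : B → ℝ) : sig M i (sig M i v) = v := by
  rw [sig_apply, sig_apply, map_sub, map_smul, Kl_al_self, smul_eq_mul, mul_one]
  ext b
  simp [al]
  ring

lemma sig_fixed {i : B} {v : B → ℝ} (h : Kl M i v = 0) : sig M i v = v := by
  rw [sig_apply, h]
  simp

end Geom

section Trig

variable (θ : ℝ)

lemma trigI2 (x : ℝ) : 2 * Real.cos θ * Real.sin x - Real.sin (x - θ) = Real.sin (x + θ) := by
  rw [Real.sin_sub, Real.sin_add]
  ring

lemma trigI3 (x : ℝ) : (4 * Real.cos θ ^ 2 - 1) * Real.sin x -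
    2 * Real.cos θ * Real.sin (x - θ) = Real.sin (x + 2 * θ) := by
  have h1 := trigI2 θ x
  have h2 := trigI2 θ (x + θ)
  rw [show x + θ - θ = x by ring, show x + θ + θ = x + 2*θ by ring] at h2
  linear_combination (2 * Real.cos θ) * h1 + h2

end Trig

section GeomTwo

variable (M) [Fintype B] [DecidableEq B]
variable (i j : B)

lemma sig_mul_al_left :
    (sig M i * sig M j) (al i) =
      (4 * Real.cos (Real.pi / M i j) ^ 2 - 1) • al i +
      (2 * Real.cos (Real.pi / M i j)) • al j := by
  have hsym : M j i = M i j := (M.symmetric i j).symm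
  rw [Module.End.mul_apply, sig_apply M j, Kl_al M j i, hsym, sig_apply M i, map_sub,
    map_smul, Kl_al_self, Kl_al M i j]
  ext b
  simp [al, Pi.single_apply]
  split_ifs <;> ring

lemma sig_mul_al_right :
    (sig M i * sig M j) (al j) =
      (-(2 * Real.cos (Real.pi / M i j))) • al i + (-1 : ℝ) • al j := by
  rw [Module.End.mul_apply, sig_al_self M j, map_neg, sig_apply M i, Kl_al M i j]
  ext b
  simp [al, Pi.single_apply]

lemma sig_pow_al_left (k : ℕ) :
    Real.sin (Real.pi / M i j) • (((sig M i * sig M j) ^ k) (al i)) =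
      Real.sin ((2 * k + 1) * (Real.pi / M i j)) • al i +
      Real.sin ((2 * k) * (Real.pi / M i j)) • al j := by
  set θ := Real.pi / M i j with hθ
  induction k with
  | zero =>
      simp
  | succ k ih =>
      have hmul : ((sig M i * sig M j) ^ (k+1)) (al i)
          = (sig M i * sig M j) (((sig M i * sig M j) ^ k) (al i)) := by
        rw [pow_succ']
        rfl
      rw [hmul, ← map_smul, ih, map_add, map_smul, map_smul,
        sig_mul_al_left M i j, sig_mul_al_right M i j, ← hθ]
      push_cast
      have e1 : Real.sin ((2 * ((k:ℝ)+1) + 1) * θ)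
          = (4 * Real.cos θ ^ 2 - 1) * Real.sin ((2*k+1) * θ)
            - 2 * Real.cos θ * Real.sin ((2*k) * θ) := by
        have := trigI3 θ ((2*k+1) * θ)
        rw [show (2*(k:ℝ)+1) * θ - θ = (2*k) * θ by ring,
          show (2*(k:ℝ)+1) * θ + 2*θ = (2*(k+1)+1) * θ by push_cast; ring] at this
        linarith
      have e2 : Real.sin ((2 * ((k:ℝ)+1)) * θ)
          = 2 * Real.cos θ * Real.sin ((2*k+1) * θ) - Real.sin ((2*k) * θ) := by
        have := trigI2 θ ((2*k+1) * θ)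
        rw [show (2*(k:ℝ)+1) * θ - θ = (2*k) * θ by ring,
          show (2*(k:ℝ)+1) * θ + θ = (2*(k+1)) * θ by push_cast; ring] at this
        linarith
      rw [e1, e2]
      ext b
      simp [al, Pi.single_apply]
      split_ifs <;> ring

lemma sig_pow_al_right (k : ℕ) :
    Real.sin (Real.pi / M i j) • (((sig M i * sig M j) ^ k) (al j)) =
      (- Real.sin ((2 * k) * (Real.pi / M i j))) • al i +
      (- Real.sin ((2 * k) * (Real.pi / M i j) - (Real.pi / M i j))) • al j := by
  set θ := Real.pi / M i j with hθ
  induction k with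
  | zero =>
      push_cast
      rw [show 2*(0:ℝ)*θ = 0 by ring, show (0:ℝ) - θ = -θ by ring, Real.sin_neg, Real.sin_zero]
      simp
  | succ k ih =>
      have hmul : ((sig M i * sig M j) ^ (k+1)) (al j)
          = (sig M i * sig M j) (((sig M i * sig M j) ^ k) (al j)) := by
        rw [pow_succ']
        rfl
      rw [hmul, ← map_smul, ih, map_add, map_smul, map_smul,
        sig_mul_al_left M i j, sig_mul_al_right M i j, ← hθ]
      push_cast
      have e1 : - Real.sin ((2 * ((k:ℝ)+1)) * θ)
          = (4 * Real.cos θ ^ 2 - 1) * (- Real.sin ((2*k) * θ))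
            - 2 * Real.cos θ * (- Real.sin ((2*k) * θ - θ)) := by
        have := trigI3 θ ((2*k) * θ)
        rw [show (2*(k:ℝ)) * θ + 2*θ = (2*(k+1)) * θ by push_cast; ring] at this
        linarith
      have e2 : - Real.sin ((2 * ((k:ℝ)+1)) * θ - θ)
          = 2 * Real.cos θ * (- Real.sin ((2*k) * θ)) - (- Real.sin ((2*k) * θ - θ)) := by
        have := trigI2 θ ((2*k) * θ)
        rw [show (2*(k:ℝ)) * θ + θ = (2*(k+1)) * θ - θ by push_cast; ring] at this
        linarith
      rw [e1, e2]
      ext b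
      simp [al, Pi.single_apply]
      split_ifs <;> ring

end GeomTwo

section GeomOrder

variable (M) [Fintype B] [DecidableEq B]

lemma sig_pow_order (i j : B) (hm2 : 2 ≤ M i j) : (sig M i * sig M j) ^ (M i j) = 1 := by
  set m : ℕ := M i j with hm
  set θ : ℝ := Real.pi / m with hθ
  have hmR : (1:ℝ) < (m:ℝ) := by exact_mod_cast Nat.lt_of_lt_of_le one_lt_two hm2
  have hθpos : 0 < θ := div_pos Real.pi_pos (by linarith)
  have hθlt : θ < Real.pi := div_lt_self Real.pi_pos hmR
  have hs : 0 < Real.sin θ := Real.sin_pos_of_pos_of_lt_pi hθpos hθlt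
  have hmθ : (m:ℝ) * θ = Real.pi := by
    rw [hθ]
    field_simp
  have hinj : Function.Injective (fun x : B → ℝ => Real.sin θ • x) :=
    smul_right_injective (B → ℝ) (ne_of_gt hs)
  have hPi : ((sig M i * sig M j) ^ m) (al i) = al i := by
    apply hinj
    show Real.sin θ • ((sig M i * sig M j) ^ m) (al i) = Real.sin θ • al i
    rw [sig_pow_al_left M i j m, ← hθ,
      show (2*(m:ℝ)+1) * θ = θ + 2*Real.pi by rw [← hmθ]; ring,
      show (2*(m:ℝ)) * θ = 2*Real.pi by rw [← hmθ]; ring,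
      Real.sin_add_two_pi, Real.sin_two_pi]
    simp
  have hPj : ((sig M i * sig M j) ^ m) (al j) = al j := by
    apply hinj
    show Real.sin θ • ((sig M i * sig M j) ^ m) (al j) = Real.sin θ • al j
    rw [sig_pow_al_right M i j m, ← hθ,
      show (2*(m:ℝ)) * θ - θ = -θ + 2*Real.pi by rw [← hmθ]; ring,
      show (2*(m:ℝ)) * θ = 2*Real.pi by rw [← hmθ]; ring,
      Real.sin_add_two_pi, Real.sin_two_pi, Real.sin_neg]
    simp
  apply LinearMap.ext
  intro v
  set cθ : ℝ := Real.cos θ with hcθ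
  set d : ℝ := 1 - cθ^2 with hdd
  have hd : d = Real.sin θ ^ 2 := by
    have := Real.sin_sq_add_cos_sq θ
    rw [hdd]
    linarith
  have hdne : d ≠ 0 := by
    rw [hd]
    positivity
  set u : ℝ := Kl M i v with hu
  set w : ℝ := Kl M j v with hw
  set a : ℝ := (u + cθ*w)/d with ha
  set b : ℝ := (w + cθ*u)/d with hb
  set f : B → ℝ := v - a • al i - b • al j with hf
  have hKli_j : Kl M i (al j) = -cθ := by rw [Kl_al M i j, hcθ, hθ, hm]
  have hKlj_i : Kl M j (al i) = -cθ := by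
    rw [Kl_al M j i, hcθ, hθ, hm, M.symmetric i j]
  have hKfi : Kl M i f = 0 := by
    rw [hf, map_sub, map_sub, map_smul, map_smul, Kl_al_self, hKli_j, ← hu]
    simp only [smul_eq_mul]
    rw [ha, hb]
    field_simp
    ring
  have hKfj : Kl M j f = 0 := by
    rw [hf, map_sub, map_sub, map_smul, map_smul, Kl_al_self, hKlj_i, ← hw]
    simp only [smul_eq_mul]
    rw [ha, hb]
    field_simp
    ring
  have hfix : (sig M i * sig M j) f = f := by
    rw [Module.End.mul_apply, sig_fixed M hKfj, sig_fixed M hKfi]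
  have hfixpow : ∀ k : ℕ, ((sig M i * sig M j) ^ k) f = f := by
    intro k
    induction k with
    | zero => rfl
    | succ k ih =>
        have : ((sig M i * sig M j) ^ (k+1)) f
            = (sig M i * sig M j) (((sig M i * sig M j) ^ k) f) := by
          rw [pow_succ']
          rfl
        rw [this, ih, hfix]
  have hv : v = f + a • al i + b • al j := by
    rw [hf]
    abel
  show ((sig M i * sig M j) ^ m) v = (1 : Module.End ℝ (B → ℝ)) v
  rw [Module.End.one_apply, hv, map_add, map_add, map_smul, map_smul, hfixpow, hPi, hPj]

lemma sig_liftable : M.IsLiftable (sig M) := by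
  intro i j
  by_cases hij : i = j
  · subst hij
    rw [M.diagonal, pow_one]
    exact LinearMap.ext (sig_invol M i)
  · rcases Nat.lt_or_ge (M i j) 2 with h | h
    · have h1 := M.off_diagonal i j hij
      rw [show M i j = 0 by omega, pow_zero]
    · exact sig_pow_order M i j h

end GeomOrder

section Rho

variable [Fintype B] [DecidableEq B]

/-- The geometric representation of the Coxeter group. -/
noncomputable def rho : W →* Module.End ℝ (B → ℝ) := cs.lift ⟨sig M, sig_liftable M⟩

lemma rho_simple (i : B) : rho cs (cs.simple i) = sig M i := cs.lift_apply_simple _ i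

lemma rho_inv_apply (w : W) (v : B → ℝ) : rho cs w (rho cs w⁻¹ v) = v := by
  rw [← Module.End.mul_apply, ← map_mul, mul_inv_cancel, map_one, Module.End.one_apply]

lemma al_linearIndependent : LinearIndependent ℝ (al : B → (B → ℝ)) := by
  have h := (Pi.basisFun ℝ B).linearIndependent
  have e : ⇑(Pi.basisFun ℝ B) = (al : B → (B → ℝ)) := by
    funext i
    rw [Pi.basisFun_apply]
    rfl
  rwa [e] at h

lemma rho_wordProd_sub_mem (ω : List B) (v : B → ℝ) :
    rho cs (cs.wordProd ω) v - v ∈ Submodule.span ℝ (al '' {b | b ∈ ω}) := by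
  induction ω generalizing v with
  | nil =>
      rw [cs.wordProd_nil, map_one, Module.End.one_apply, sub_self]
      exact Submodule.zero_mem _
  | cons i ω ih =>
      rw [cs.wordProd_cons, map_mul, Module.End.mul_apply, rho_simple]
      set u := rho cs (cs.wordProd ω) v with hu
      have hmem : al i ∈ Submodule.span ℝ (al '' {b | b ∈ i :: ω}) :=
        Submodule.subset_span ⟨i, by simp, rfl⟩
      have h1 : sig M i u - u ∈ Submodule.span ℝ (al '' {b | b ∈ i :: ω}) := by
        rw [sig_apply, sub_sub_cancel_left]
        exact Submodule.neg_mem _ (Submodule.smul_mem _ _ hmem)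
      have h2 : u - v ∈ Submodule.span ℝ (al '' {b | b ∈ i :: ω}) := by
        refine Submodule.span_mono (Set.image_mono ?_) (ih v)
        intro b hb
        exact List.mem_cons_of_mem i hb
      have := Submodule.add_mem _ h1 h2
      simpa using this

lemma rho_refl_sub_mem {t : W} (ht : cs.IsReflection t) :
    ∃ z : B → ℝ, ∀ v, rho cs t v - v ∈ Submodule.span ℝ {z} := by
  obtain ⟨w, i, rfl⟩ := ht
  refine ⟨rho cs w (al i), fun v => ?_⟩
  rw [map_mul, map_mul, Module.End.mul_apply, Module.End.mul_apply, rho_simple, sig_apply,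
    map_sub, map_smul, rho_inv_apply]
  have : v - (2 * Kl M i (rho cs w⁻¹ v)) • rho cs w (al i) - v
      = -((2 * Kl M i (rho cs w⁻¹ v)) • rho cs w (al i)) := by abel
  rw [this]
  exact Submodule.neg_mem _ (Submodule.smul_mem _ _ (Submodule.subset_span rfl))

lemma prod_refl_moved (L : List W) (hL : ∀ t ∈ L, cs.IsReflection t) :
    ∃ zs : List (B → ℝ), zs.length = L.length ∧
      ∀ v, rho cs L.prod v - v ∈ Submodule.span ℝ {x | x ∈ zs} := by
  induction L with
  | nil => exact ⟨[], rfl, by simp⟩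
  | cons t L ih =>
      obtain ⟨zs, hlen, hzs⟩ := ih (fun t' ht' => hL t' (List.mem_cons_of_mem t ht'))
      obtain ⟨z, hz⟩ := rho_refl_sub_mem cs (hL t (List.mem_cons_self))
      refine ⟨z :: zs, by simp [hlen], fun v => ?_⟩
      have key : rho cs (t :: L).prod v - v
          = (rho cs t (rho cs L.prod v) - rho cs L.prod v) + (rho cs L.prod v - v) := by
        rw [List.prod_cons, map_mul, Module.End.mul_apply]
        abel
      rw [key]
      refine Submodule.add_mem _ ?_ ?_
      · refine Submodule.span_mono ?_ (hz (rho cs L.prod v))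
        intro x hx
        simp only [Set.mem_singleton_iff] at hx
        simp [hx]
      · refine Submodule.span_mono ?_ (hzs v)
        intro x hx
        simp only [Set.mem_setOf_eq] at hx ⊢
        exact List.mem_cons_of_mem z hx

lemma fixed_all (v : B → ℝ) :
    ∀ ω : List B, ω.Nodup → rho cs (cs.wordProd ω) v = v → ∀ i ∈ ω, sig M i v = v := by
  intro ω
  induction ω with
  | nil => intro _ _ i hi; simp at hi
  | cons i ω ih =>
      intro hnd h k hk
      rw [cs.wordProd_cons, map_mul, Module.End.mul_apply, rho_simple] at h
      set u := rho cs (cs.wordProd ω) v with hu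
      have h1 : u - v ∈ Submodule.span ℝ (al '' {i}) := by
        have e1 : u - sig M i u = (2 * Kl M i u) • al i := by
          rw [sig_apply]
          abel
        rw [← h, e1]
        exact Submodule.smul_mem _ _ (Submodule.subset_span ⟨i, rfl, rfl⟩)
      have h2 : u - v ∈ Submodule.span ℝ (al '' {b | b ∈ ω}) := rho_wordProd_sub_mem cs ω v
      have hdisj : Disjoint ({i} : Set B) {b | b ∈ ω} := by
        rw [Set.disjoint_left]
        intro a ha
        simp only [Set.mem_singleton_iff] at ha
        subst ha
        simpa using (List.nodup_cons.1 hnd).1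
      have hzero : u - v = 0 :=
        Submodule.disjoint_def.1 ((al_linearIndependent).disjoint_span_image hdisj) _ h1 h2
      have huv : u = v := by
        have := sub_eq_zero.1 hzero
        exact this
      rcases List.mem_cons.1 hk with rfl | hk'
      · rw [← huv] at h ⊢
        exact h
      · exact ih (List.nodup_cons.1 hnd).2 huv k hk'

end Rho

section Form

variable [Fintype B] [DecidableEq B] [Fintype W]

/-- standard dot product pairing -/
noncomputable def dlin (u : B → ℝ) : (B → ℝ) →ₗ[ℝ] ℝ where
  toFun x := ∑ b, u b * x b
  map_add' x y := by simp [mul_add, Finset.sum_add_distrib]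
  map_smul' r x := by
    simp only [Pi.smul_apply, smul_eq_mul, RingHom.id_apply, Finset.mul_sum]
    exact Finset.sum_congr rfl fun k _ => by ring

/-- `W`-invariant inner product obtained by averaging -/
noncomputable def dotW (v x : B → ℝ) : ℝ := ∑ g : W, dlin (rho cs g v) (rho cs g x)

lemma dotW_inv (g : W) (v x : B → ℝ) : dotW cs (rho cs g v) (rho cs g x) = dotW cs v x := by
  unfold dotW
  refine Fintype.sum_equiv (Equiv.mulRight g) _ _ fun w => ?_
  rw [Equiv.coe_mulRight, map_mul]
  rfl

lemma dotW_self_eq_zero {v : B → ℝ} (h : dotW cs v v = 0) : v = 0 := by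
  have hterm : ∀ g : W, g ∈ (Finset.univ : Finset W) →
      (0:ℝ) ≤ dlin (rho cs g v) (rho cs g v) := by
    intro g _
    show (0:ℝ) ≤ ∑ b, (rho cs g v) b * (rho cs g v) b
    exact Finset.sum_nonneg fun b _ => mul_self_nonneg _
  have h1 := (Finset.sum_eq_zero_iff_of_nonneg hterm).1 h 1 (Finset.mem_univ 1)
  rw [map_one, Module.End.one_apply] at h1
  have h2 : ∑ b, v b * v b = 0 := h1
  funext b
  have := (Finset.sum_eq_zero_iff_of_nonneg (fun b _ => mul_self_nonneg (v b))).1 h2 b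
    (Finset.mem_univ b)
  exact mul_self_eq_zero.1 this

lemma dotW_right_neg (v x : B → ℝ) : dotW cs v (-x) = - dotW cs v x := by
  unfold dotW
  simp [map_neg]

lemma dotW_right_sum {ι : Type} (s : Finset ι) (f : ι → (B → ℝ)) (v : B → ℝ) :
    dotW cs v (∑ k ∈ s, f k) = ∑ k ∈ s, dotW cs v (f k) := by
  unfold dotW
  simp only [map_sum]
  exact Finset.sum_comm

lemma dotW_right_smul (r : ℝ) (v x : B → ℝ) : dotW cs v (r • x) = r * dotW cs v x := by
  unfold dotW
  simp [map_smul, smul_eq_mul, Finset.mul_sum]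

include cs in
lemma fixed_vec_zero {v : B → ℝ} (hfix : ∀ i : B, sig M i v = v) : v = 0 := by
  have hzero : ∀ k : B, dotW cs v (al k) = 0 := by
    intro k
    have h1 := dotW_inv cs (cs.simple k) v (al k)
    rw [rho_simple, hfix k, sig_al_self] at h1
    have h2 : dotW cs v (- al k) = - dotW cs v (al k) := dotW_right_neg cs v (al k)
    linarith
  apply dotW_self_eq_zero cs
  have hsingle : ∀ k, Pi.single k (v k) = (v k) • al k := by
    intro k
    funext b
    simp only [al, Pi.smul_apply, smul_eq_mul, Pi.single_apply]
    split_ifs <;> ring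
  have hv : v = ∑ k, (v k) • al k :=
    calc v = ∑ k, Pi.single k (v k) := (Finset.univ_sum_single v).symm
      _ = ∑ k, (v k) • al k := Finset.sum_congr rfl fun k _ => hsingle k
  calc dotW cs v v = dotW cs v (∑ k, (v k) • al k) := congrArg (dotW cs v) hv
    _ = ∑ k, dotW cs v ((v k) • al k) := dotW_right_sum cs _ _ _
    _ = 0 := by simp [dotW_right_smul, hzero]

end Form

section Bound

variable [Fintype B] [DecidableEq B] [Fintype W]

lemma reflLength_ge (l : List B) (hnd : l.Nodup) (hall : ∀ i : B, i ∈ l) :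
    l.length ≤ reflLength cs (cs.wordProd l) := by
  obtain ⟨L, hLlen, hLrefl, hLprod⟩ := exists_reflList cs (cs.wordProd l)
  rw [← hLlen]
  obtain ⟨zs, hzlen, hzs⟩ := prod_refl_moved cs L hLrefl
  set T : Module.End ℝ (B → ℝ) := rho cs (cs.wordProd l) - 1 with hT
  have hinj : Function.Injective T := by
    rw [← LinearMap.ker_eq_bot, Submodule.eq_bot_iff]
    intro v hv
    rw [LinearMap.mem_ker, hT, LinearMap.sub_apply, Module.End.one_apply, sub_eq_zero] at hv
    exact fixed_vec_zero cs (fun i => fixed_all cs v l hnd hv i (hall i))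
  have hrange : LinearMap.range T ≤ Submodule.span ℝ {x | x ∈ zs} := by
    rintro y ⟨v, rfl⟩
    rw [hT, LinearMap.sub_apply, Module.End.one_apply]
    have := hzs v
    rwa [hLprod] at this
  have h1 : Module.finrank ℝ (B → ℝ) = Fintype.card B := Module.finrank_pi ℝ
  have h2 := LinearMap.finrank_range_of_inj hinj
  have h3 : Module.finrank ℝ (LinearMap.range T)
      ≤ Module.finrank ℝ (Submodule.span ℝ {x | x ∈ zs}) := Submodule.finrank_mono hrange
  have h4 : {x | x ∈ zs} = ((zs.toFinset : Finset (B → ℝ)) : Set (B → ℝ)) := by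
    ext y
    simp
  have h5 : Module.finrank ℝ (Submodule.span ℝ {x | x ∈ zs}) ≤ zs.toFinset.card := by
    rw [h4]
    exact finrank_span_finset_le_card zs.toFinset
  have h6 : zs.toFinset.card ≤ zs.length := List.toFinset_card_le zs
  have hcard : l.length = Fintype.card B := by
    rw [← List.toFinset_card_of_nodup hnd]
    have : l.toFinset = (Finset.univ : Finset B) :=
      Finset.eq_univ_iff_forall.2 (fun i => List.mem_toFinset.2 (hall i))
    rw [this, Finset.card_univ]
  omega

lemma conj_wordProd (g : W) (A : List B) :
    (A.map fun a => g * cs.simple a * g⁻¹).prod = g * cs.wordProd A * g⁻¹ := by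
  induction A with
  | nil => simp
  | cons a A ih =>
      rw [List.map_cons, List.prod_cons, ih, cs.wordProd_cons]
      group

lemma key_dvd (l : List B) (hnd : l.Nodup) (hall : ∀ i : B, i ∈ l) (i j : B)
    (hA : ∃ A Bb C, l = A ++ i :: (Bb ++ j :: C)) :
    reflDvd cs (cs.simple i * cs.simple j) (cs.wordProd l) := by
  obtain ⟨A, Bb, C, rfl⟩ := hA
  set x := cs.simple i * cs.simple j with hx
  have hxle : reflLength cs x ≤ 2 := by
    have := reflLength_le cs (L := [cs.simple i, cs.simple j]) (w := x) ?_ ?_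
    · simpa using this
    · intro t ht
      rcases List.mem_pair.1 ht with rfl | rfl
      exacts [cs.isReflection_simple i, cs.isReflection_simple j]
    · simp [hx]
  set g1 : W := cs.simple j * cs.simple i with hg1
  set L2 : List W := (A.map fun a => g1 * cs.simple a * g1⁻¹)
      ++ ((Bb.map fun b => cs.simple j * cs.simple b * (cs.simple j)⁻¹)
      ++ (C.map cs.simple)) with hL2
  have hL2refl : ∀ t ∈ L2, cs.IsReflection t := by
    intro t ht
    rw [hL2] at ht
    rcases List.mem_append.1 ht with h | h
    · obtain ⟨a, _, rfl⟩ := List.mem_map.1 h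
      exact ⟨g1, a, rfl⟩
    rcases List.mem_append.1 h with h | h
    · obtain ⟨b, _, rfl⟩ := List.mem_map.1 h
      exact ⟨cs.simple j, b, rfl⟩
    · obtain ⟨a, _, rfl⟩ := List.mem_map.1 h
      exact cs.isReflection_simple a
  have hmapC : (C.map cs.simple).prod = cs.wordProd C := rfl
  have hL2prod : L2.prod = x⁻¹ * cs.wordProd (A ++ i :: (Bb ++ j :: C)) := by
    rw [hL2, List.prod_append, List.prod_append, conj_wordProd, conj_wordProd, hmapC,
      cs.wordProd_append, cs.wordProd_cons, cs.wordProd_append, cs.wordProd_cons,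
      hx, hg1, mul_inv_rev, mul_inv_rev, cs.inv_simple, cs.inv_simple]
    group
    rw [mul_assoc (cs.simple j * cs.simple i * cs.wordProd A * cs.simple i)
      (cs.simple j) (cs.simple j), cs.simple_mul_simple_self, mul_one]
  have hxcle : reflLength cs (x⁻¹ * cs.wordProd (A ++ i :: (Bb ++ j :: C)))
      ≤ A.length + (Bb.length + C.length) := by
    have := reflLength_le cs hL2refl hL2prod
    simpa [hL2] using this
  have hlow := reflLength_ge cs _ hnd hall
  have htri := reflLength_triangle cs x (cs.wordProd (A ++ i :: (Bb ++ j :: C)))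
  have hlen : (A ++ i :: (Bb ++ j :: C)).length = A.length + (Bb.length + C.length) + 2 := by
    simp
    omega
  unfold reflDvd
  omega

lemma exists_decomp (l : List B) (i j : B) (hij : i ≠ j) (hi : i ∈ l) (hj : j ∈ l) :
    (∃ A Bb C, l = A ++ i :: (Bb ++ j :: C)) ∨ (∃ A Bb C, l = A ++ j :: (Bb ++ i :: C)) := by
  induction l with
  | nil => cases hi
  | cons a l ih =>
      by_cases hai : a = i
      · subst hai
        have hj' : j ∈ l := by
          rcases List.mem_cons.1 hj with h | h
          · exact absurd h.symm hij
          · exact h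
        obtain ⟨A, C, rfl⟩ := List.append_of_mem hj'
        exact Or.inl ⟨[], A, C, rfl⟩
      · by_cases haj : a = j
        · subst haj
          have hi' : i ∈ l := by
            rcases List.mem_cons.1 hi with h | h
            · exact absurd h.symm hai
            · exact h
          obtain ⟨A, C, rfl⟩ := List.append_of_mem hi'
          exact Or.inr ⟨[], A, C, rfl⟩
        · have hi' : i ∈ l := by
            rcases List.mem_cons.1 hi with h | h
            · exact absurd h.symm hai
            · exact h
          have hj' : j ∈ l := by
            rcases List.mem_cons.1 hj with h | h
            · exact absurd h.symm haj
            · exact h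
          rcases ih hi' hj' with ⟨A, Bb, C, rfl⟩ | ⟨A, Bb, C, rfl⟩
          · exact Or.inl ⟨a :: A, Bb, C, rfl⟩
          · exact Or.inr ⟨a :: A, Bb, C, rfl⟩

end Bound

end DualAux

/-- in the monoid presented by generators `{ b_t : t ∈ T }` and the dual
braid relations associated to a standard Coxeter element `c`, the generators indexed by
the simple reflections satisfy the Artin braid relations; consequently there is a monoid
homomorphism from the Artin–Tits monoid `B⁺(W)` sending each Artin generator `b_s` to
the corresponding dual generator. -/
theorem simple_generators_satisfy_braid_relations_in_dual_monoid
    {B W : Type} [Group W] [Finite W]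
    {M : CoxeterMatrix B} (cs : CoxeterSystem M W)
    (l : List B) (hnd : l.Nodup) (hall : ∀ i : B, i ∈ l)
    (c : W) (hc : c = cs.wordProd l) :
    (∀ i j : B,
      ((CoxeterSystem.braidWord M i j).map (fun k =>
        PresentedMonoid.of (dualBraidRels cs c)
          ⟨cs.simple k, cs.isReflection_simple k⟩)).prod =
      ((CoxeterSystem.braidWord M j i).map (fun k =>
        PresentedMonoid.of (dualBraidRels cs c)
          ⟨cs.simple k, cs.isReflection_simple k⟩)).prod) ∧
    (∃ φ : PresentedMonoid (artinMonoidRels M) →* PresentedMonoid (dualBraidRels cs c),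
      ∀ i : B, φ (PresentedMonoid.of (artinMonoidRels M) i) =
        PresentedMonoid.of (dualBraidRels cs c) ⟨cs.simple i, cs.isReflection_simple i⟩) := by
  classical
  subst hc
  haveI : Fintype B := ⟨l.toFinset, fun i => List.mem_toFinset.2 (hall i)⟩
  haveI : Fintype W := Fintype.ofFinite W
  set c := cs.wordProd l with hc
  have part1 : ∀ i j : B,
      ((CoxeterSystem.braidWord M i j).map (DualAux.Fg cs c)).prod =
      ((CoxeterSystem.braidWord M j i).map (DualAux.Fg cs c)).prod := by
    intro i j
    by_cases hij : i = j
    · subst hij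
      rfl
    · rcases DualAux.exists_decomp l i j hij (hall i) (hall j) with h | h
      · exact DualAux.partA cs hij (DualAux.key_dvd cs l hnd hall i j h)
      · exact (DualAux.partA cs (Ne.symm hij) (DualAux.key_dvd cs l hnd hall j i h)).symm
  constructor
  · exact part1
  · refine ⟨PresentedMonoid.lift (DualAux.Fg cs c) ?_, fun i => rfl⟩
    rintro a b ⟨i, j, rfl, rfl⟩
    rw [map_list_prod, map_list_prod, List.map_map, List.map_map]
    have he : (⇑(FreeMonoid.lift (DualAux.Fg cs c)) ∘ FreeMonoid.of) = DualAux.Fg cs c :=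
      funext fun x => FreeMonoid.lift_eval_of (DualAux.Fg cs c) x
    rw [he]
    exact part1 i j
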